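/- arXiv:1701.08498 — 6 statements merged into one kernel-verified Lean document; each statement's English description precedes it below -/
import Mathlib

section
/- For any vector x ∈ ℝⁿ and integer k with 1 ≤ k ≤ n, ‖x‖₀ ≤ k if and only if ‖x‖₁ − |||x|||_{k,1} = 0, where ‖x‖₀ is the number of nonzero entries, ‖x‖₁ is the ℓ₁-norm, and |||x|||_{k,1} is the sum of the k largest absolute values of entries of x. -/
/-- ℓ₀ "norm": number of nonzero entries. -/
noncomputable def l0norm {n : ℕ} (x : Fin n → ℝ) : ℕ :=
  (Finset.univ.filter fun i => x i ≠ 0).card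

theorem l0_le_iff_l1_sub_topk1_eq_zero {n k : ℕ} (hk1 : 1 ≤ k) (hkn : k ≤ n)
    (x : Fin n → ℝ) (π : Equiv.Perm (Fin n))
    (hsort : ∀ i j : Fin n, i ≤ j → |x (π j)| ≤ |x (π i)|) :
    l0norm x ≤ k ↔
      (∑ i, |x i|) - (∑ i ∈ Finset.univ.filter fun i : Fin n => (i : ℕ) < k, |x (π i)|) = 0 := by
  set S := Finset.univ.filter fun i : Fin n => (i : ℕ) < k with hS
  have hsum : (∑ i, |x i|) = ∑ i, |x (π i)| := (Equiv.sum_comp π (fun i => |x i|)).symm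
  have hsplit : (∑ i, |x (π i)|) = (∑ i ∈ S, |x (π i)|) + ∑ i ∈ Sᶜ, |x (π i)| :=
    (Finset.sum_add_sum_compl S _).symm
  have key : ((∑ i, |x i|) - (∑ i ∈ S, |x (π i)|) = 0) ↔ ∀ i ∈ Sᶜ, |x (π i)| = 0 := by
    rw [hsum, hsplit]
    constructor
    · intro h
      have h0 : ∑ i ∈ Sᶜ, |x (π i)| = 0 := by linarith
      exact (Finset.sum_eq_zero_iff_of_nonneg (fun _ _ => abs_nonneg _)).mp h0
    · intro h; rw [Finset.sum_eq_zero h]; ring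
  rw [key]
  have hScard : S.card = k := by
    have : S = Finset.map (Fin.castLEEmb hkn) Finset.univ := by
      ext i
      simp only [hS, Finset.mem_filter, Finset.mem_univ, true_and, Finset.mem_map]
      constructor
      · intro hi
        exact ⟨⟨(i : ℕ), hi⟩, by simp [Fin.castLEEmb, Fin.ext_iff]⟩
      · rintro ⟨j, -, rfl⟩
        simp [Fin.castLEEmb]
    rw [this, Finset.card_map, Finset.card_univ, Fintype.card_fin]
  constructor
  · intro hl0 i hi
    simp only [hS, Finset.mem_compl, Finset.mem_filter, Finset.mem_univ, true_and, not_lt] at hi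
    by_contra hne
    have hpos : (0:ℝ) < |x (π i)| := abs_pos.mpr (fun h0 => hne (by rw [h0, abs_zero]))
    have hsub : Finset.image π (Finset.Iic i) ⊆ Finset.univ.filter fun j => x j ≠ 0 := by
      intro a ha
      obtain ⟨j, hj, rfl⟩ := Finset.mem_image.mp ha
      simp only [Finset.mem_Iic] at hj
      have := hsort j i hj
      have : (0:ℝ) < |x (π j)| := lt_of_lt_of_le hpos this
      simp only [Finset.mem_filter, Finset.mem_univ, true_and]
      exact fun h0 => by simp [h0] at this
    have hcard : (Finset.Iic i).card ≤ l0norm x := by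
      have := Finset.card_le_card hsub
      rwa [Finset.card_image_of_injective _ π.injective] at this
    rw [Fin.card_Iic] at hcard
    omega
  · intro h
    unfold l0norm
    calc (Finset.univ.filter fun i => x i ≠ 0).card
        ≤ (S.image π).card := by
          apply Finset.card_le_card
          intro a ha
          simp only [Finset.mem_filter, Finset.mem_univ, true_and] at ha
          rw [Finset.mem_image]
          refine ⟨π.symm a, ?_, by simp⟩
          by_contra hm
          have : π.symm a ∈ Sᶜ := Finset.mem_compl.mpr hm
          have := h _ this
          simp only [Equiv.apply_symm_apply] at this
          exact ha (abs_eq_zero.mp this)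
      _ ≤ S.card := Finset.card_image_le
      _ = k := hScard
end

section
/- Let ν: ℝ → ℝ≥0 satisfy ν(a) = 0 iff a = 0. For x ∈ ℝⁿ, let ν(x_{π(1)}) ≥ ⋯ ≥ ν(x_{π(n)}) be the values ν(x₁),…,ν(xₙ) sorted in decreasing order. Then for integers 1 ≤ k < h ≤ n: ‖x‖₀ ≤ k if and only if ∑_{i=1}^{h} ν(x_{π(i)}) − ∑_{i=1}^{k} ν(x_{π(i)}) = 0. -/
theorem l0_le_iff_toph_sub_topk_eq_zero {n k h : ℕ} (hk1 : 1 ≤ k) (hkh : k < h) (hhn : h ≤ n)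
    (ν : ℝ → ℝ) (hν : ∀ a, 0 ≤ ν a) (hν0 : ∀ a, ν a = 0 ↔ a = 0)
    (x : Fin n → ℝ) (π : Equiv.Perm (Fin n))
    (hsort : ∀ i j : Fin n, i ≤ j → ν (x (π j)) ≤ ν (x (π i))) :
    l0norm x ≤ k ↔
      (∑ i ∈ Finset.univ.filter fun i : Fin n => (i : ℕ) < h, ν (x (π i))) -
        (∑ i ∈ Finset.univ.filter fun i : Fin n => (i : ℕ) < k, ν (x (π i))) = 0 := by
  have hkn : k < n := lt_of_lt_of_le hkh hhn
  set A : Finset (Fin n) := Finset.univ.filter fun i : Fin n => (i : ℕ) < k with hA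
  set B : Finset (Fin n) := Finset.univ.filter fun i : Fin n => (i : ℕ) < h with hB
  have hAB : A ⊆ B := by
    intro i hi
    simp only [hA, hB, Finset.mem_filter, Finset.mem_univ, true_and] at *
    exact lt_of_lt_of_le hi (le_of_lt hkh)
  have hdiff : (∑ i ∈ B, ν (x (π i))) - (∑ i ∈ A, ν (x (π i)))
      = ∑ i ∈ B \ A, ν (x (π i)) := by
    rw [Finset.sum_sdiff_eq_sub hAB]
  rw [hdiff]
  have hzero : (∑ i ∈ B \ A, ν (x (π i))) = 0 ↔
      ∀ i ∈ B \ A, ν (x (π i)) = 0 :=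
    Finset.sum_eq_zero_iff_of_nonneg (fun i _ => hν _)
  rw [hzero]
  have hmem : ∀ i : Fin n, i ∈ B \ A ↔ (k ≤ (i : ℕ) ∧ (i : ℕ) < h) := by
    intro i
    simp [hA, hB, Finset.mem_sdiff, not_lt, and_comm]
  -- l0norm in terms of π
  have hl0 : l0norm x = (Finset.univ.filter fun i : Fin n => x (π i) ≠ 0).card := by
    unfold l0norm
    apply Finset.card_bij' (fun i _ => π.symm i) (fun i _ => π i)
    · intro i hi
      simp only [Finset.mem_filter, Finset.mem_univ, true_and] at *
      simpa using hi
    · intro i hi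
      simp only [Finset.mem_filter, Finset.mem_univ, true_and] at *
      exact hi
    · intro i _; simp
    · intro i _; simp
  constructor
  · intro hle i hi
    rw [hmem] at hi
    by_contra hne
    have hx : ∀ j : Fin n, j ≤ i → x (π j) ≠ 0 := by
      intro j hj hxj
      have : ν (x (π i)) ≤ ν (x (π j)) := hsort j i hj
      rw [hxj, (hν0 0).mpr rfl] at this
      exact hne (le_antisymm this (hν _))
    have hsub : Finset.Iic i ⊆ Finset.univ.filter fun j : Fin n => x (π j) ≠ 0 := by
      intro j hj
      simp only [Finset.mem_Iic] at hj
      simp only [Finset.mem_filter, Finset.mem_univ, true_and]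
      exact hx j hj
    have hcard : (i : ℕ) + 1 ≤ l0norm x := by
      rw [hl0]
      calc (i : ℕ) + 1 = (Finset.Iic i).card := by rw [Fin.card_Iic]
        _ ≤ _ := Finset.card_le_card hsub
    have h1 := hi.1
    omega
  · intro hsum
    have hkmem : (⟨k, hkn⟩ : Fin n) ∈ B \ A := by
      rw [hmem]; exact ⟨le_refl _, hkh⟩
    have hνk : ν (x (π ⟨k, hkn⟩)) = 0 := hsum _ hkmem
    have hsub : (Finset.univ.filter fun i : Fin n => x (π i) ≠ 0) ⊆ A := by
      intro i hi
      simp only [Finset.mem_filter, Finset.mem_univ, true_and] at hi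
      simp only [hA, Finset.mem_filter, Finset.mem_univ, true_and]
      by_contra hik
      push_neg at hik
      have hle : (⟨k, hkn⟩ : Fin n) ≤ i := by
        simpa [Fin.le_def] using hik
      have : ν (x (π i)) ≤ 0 := hνk ▸ hsort _ i hle
      exact hi ((hν0 _).mp (le_antisymm this (hν _)))
    have hcardA : A.card = k := by
      have : A = Finset.Iio (⟨k, hkn⟩ : Fin n) := by
        ext i; simp [hA, Fin.lt_def]
      rw [this, Fin.card_Iio]
    rw [hl0]
    calc _ ≤ A.card := Finset.card_le_card hsub
      _ = k := hcardA
end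

section
/- Let ν: ℝ → ℝ≥0 satisfy ν(a) = 0 iff a = 0, and let π sort ν(x₁),…,ν(xₙ) in decreasing order. Then for x ∈ ℝⁿ, ‖x‖₀ ≤ k if and only if ∑_{i=1}^{n} ν(x_i) − ∑_{i=1}^{k} ν(x_{π(i)}) = 0. -/
theorem l0_le_iff_total_sub_topk_eq_zero {n k : ℕ} (hk1 : 1 ≤ k) (hkn : k ≤ n)
    (ν : ℝ → ℝ) (hν : ∀ a, 0 ≤ ν a) (hν0 : ∀ a, ν a = 0 ↔ a = 0)
    (x : Fin n → ℝ) (π : Equiv.Perm (Fin n))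
    (hsort : ∀ i j : Fin n, i ≤ j → ν (x (π j)) ≤ ν (x (π i))) :
    l0norm x ≤ k ↔
      (∑ i, ν (x i)) -
        (∑ i ∈ Finset.univ.filter fun i : Fin n => (i : ℕ) < k, ν (x (π i))) = 0 := by
  have hsum : (∑ i, ν (x i)) = ∑ i, ν (x (π i)) :=
    (Equiv.sum_comp π (fun i => ν (x i))).symm
  have hsplit : (∑ i, ν (x (π i))) =
      (∑ i ∈ Finset.univ.filter (fun i : Fin n => (i : ℕ) < k), ν (x (π i)))
      + ∑ i ∈ Finset.univ.filter (fun i : Fin n => ¬ (i : ℕ) < k), ν (x (π i)) :=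
    (Finset.sum_filter_add_sum_filter_not _ _ _).symm
  have hdiff : (∑ i, ν (x i)) -
      (∑ i ∈ Finset.univ.filter fun i : Fin n => (i : ℕ) < k, ν (x (π i)))
      = ∑ i ∈ Finset.univ.filter (fun i : Fin n => ¬ (i : ℕ) < k), ν (x (π i)) := by
    rw [hsum, hsplit]; ring
  rw [hdiff, Finset.sum_eq_zero_iff_of_nonneg (fun i _ => hν _)]
  -- card of the < k filter is k
  have hcardlt : (Finset.univ.filter fun j : Fin n => (j : ℕ) < k).card = k := by
    have heq : (Finset.univ.filter fun j : Fin n => (j : ℕ) < k).card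
        = (Finset.univ : Finset (Fin k)).card := by
      apply Finset.card_bij (fun (j : Fin n) hj => (⟨(j : ℕ), by
        simp only [Finset.mem_filter] at hj; exact hj.2⟩ : Fin k))
      · intro a ha; exact Finset.mem_univ _
      · intro a ha b hb hab
        simpa [Fin.ext_iff] using hab
      · intro b _
        refine ⟨⟨(b : ℕ), lt_of_lt_of_le b.isLt hkn⟩, ?_, rfl⟩
        simp [b.isLt]
    simpa using heq
  constructor
  · intro hle i hi
    simp only [Finset.mem_filter, Finset.mem_univ, true_and, not_lt] at hi
    by_contra hne
    have hpos : x (π i) ≠ 0 := fun h0 => hne ((hν0 _).2 h0)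
    -- all j with j < k (so j ≤ i) have x (π j) ≠ 0
    have hsub : insert i (Finset.univ.filter fun j : Fin n => (j : ℕ) < k)
        ⊆ Finset.univ.filter fun j : Fin n => x (π j) ≠ 0 := by
      intro j hj
      simp only [Finset.mem_insert, Finset.mem_filter, Finset.mem_univ, true_and] at hj ⊢
      rcases hj with rfl | hj
      · exact hpos
      · intro h0
        have hle' : j ≤ i := by
          have : (j : ℕ) ≤ (i : ℕ) := le_trans (le_of_lt hj) hi
          exact this
        have := hsort j i hle'
        have h1 : ν (x (π j)) = 0 := (hν0 _).2 h0
        have h2 : ν (x (π i)) = 0 := le_antisymm (h1 ▸ this) (hν _)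
        exact hne h2
    have hnotmem : i ∉ (Finset.univ.filter fun j : Fin n => (j : ℕ) < k) := by
      simp [not_lt.2 hi]
    have hcard1 : (insert i (Finset.univ.filter fun j : Fin n => (j : ℕ) < k)).card = k + 1 := by
      rw [Finset.card_insert_of_notMem hnotmem, hcardlt]
    have hcard2 : (Finset.univ.filter fun j : Fin n => x (π j) ≠ 0).card
        = l0norm x := by
      unfold l0norm
      apply Finset.card_bij (fun j _ => π j)
      · intro a ha
        simp only [Finset.mem_filter, Finset.mem_univ, true_and] at ha ⊢
        exact ha
      · intro a _ b _ hab; exact π.injective hab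
      · intro b hb
        refine ⟨π.symm b, ?_, by simp⟩
        simp only [Finset.mem_filter, Finset.mem_univ, true_and] at hb ⊢
        simpa using hb
    have := Finset.card_le_card hsub
    rw [hcard1, hcard2] at this
    omega
  · intro h
    unfold l0norm
    have hsub : (Finset.univ.filter fun i : Fin n => x i ≠ 0)
        ⊆ (Finset.univ.filter fun j : Fin n => (j : ℕ) < k).image π := by
      intro i hi
      simp only [Finset.mem_filter, Finset.mem_univ, true_and] at hi
      refine Finset.mem_image.2 ⟨π.symm i, ?_, by simp⟩
      simp only [Finset.mem_filter, Finset.mem_univ, true_and]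
      by_contra hlt
      have := h (π.symm i) (by
        simp only [Finset.mem_filter, Finset.mem_univ, true_and]; exact hlt)
      rw [Equiv.apply_symm_apply] at this
      exact hi ((hν0 _).1 this)
    calc (Finset.univ.filter fun i : Fin n => x i ≠ 0).card
        ≤ ((Finset.univ.filter fun j : Fin n => (j : ℕ) < k).image π).card :=
          Finset.card_le_card hsub
      _ ≤ (Finset.univ.filter fun j : Fin n => (j : ℕ) < k).card :=
          Finset.card_image_le
      _ = k := hcardlt
end

section
/- Let φ: ℝⁿ → ℝ be continuous, C ⊆ ℝⁿ nonempty closed convex, 1 ≤ k ≤ n, and define the penalty P(x) = ‖x‖₂² − |||x|||²_{k,2} ≥ 0. Let {ρ_t} be an increasing positive sequence with ρ_t → ∞, and for each t let x_t minimize φ(x) + ρ_t P(x) over x ∈ C. Assume the feasible set {x ∈ C : ‖x‖₀ ≤ k} is nonempty and that a minimizer x̄ of φ over it exists. Then any accumulation point x* of {x_t} satisfies ‖x*‖₀ ≤ k, x* ∈ C, and φ(x*) = φ(x̄); i.e., x* is optimal for min{φ(x) : ‖x‖₀ ≤ k, x ∈ C}. -/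
open Filter

/-- Top-(k,2) norm squared: the maximum, over subsets `S` of cardinality `k`, of
`∑ i ∈ S, x i ^ 2`; this equals the sum of the `k` largest squared entries of `x`. -/
noncomputable def topk2 {n : ℕ} (k : ℕ) (hk : k ≤ n) (x : Fin n → ℝ) : ℝ :=
  ((Finset.univ : Finset (Fin n)).powersetCard k).sup'
    (Finset.powersetCard_nonempty.mpr (by simpa using hk)) fun S => ∑ i ∈ S, x i ^ 2

lemma topk2_le {n k : ℕ} (hk : k ≤ n) (x : Fin n → ℝ) :
    topk2 k hk x ≤ ∑ i, x i ^ 2 := by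
  apply Finset.sup'_le
  intro S _
  exact Finset.sum_le_sum_of_subset_of_nonneg (Finset.subset_univ S)
    (fun i _ _ => sq_nonneg _)

lemma topk2_eq_of_l0 {n k : ℕ} (hk : k ≤ n) (x : Fin n → ℝ) (hx : l0norm x ≤ k) :
    topk2 k hk x = ∑ i, x i ^ 2 := by
  refine le_antisymm (topk2_le hk x) ?_
  obtain ⟨S, hSsub, hScard⟩ := Finset.exists_superset_card_eq
    (s := Finset.univ.filter fun i => x i ≠ 0) (hx : _ ≤ k) (by simpa using hk)
  have hmem : S ∈ (Finset.univ : Finset (Fin n)).powersetCard k := by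
    simp [Finset.mem_powersetCard, hScard]
  have hsum : ∑ i ∈ S, x i ^ 2 = ∑ i, x i ^ 2 := by
    refine Finset.sum_subset (Finset.subset_univ S) ?_
    intro i _ hi
    have : x i = 0 := by
      by_contra h
      exact hi (hSsub (by simp [h]))
    simp [this]
  rw [← hsum]
  exact Finset.le_sup' (f := fun S => ∑ i ∈ S, x i ^ 2) hmem

lemma l0_le_of_topk2 {n k : ℕ} (hk : k ≤ n) (x : Fin n → ℝ)
    (h : topk2 k hk x = ∑ i, x i ^ 2) : l0norm x ≤ k := by
  obtain ⟨S, hS, hval⟩ := Finset.exists_mem_eq_sup'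
    (Finset.powersetCard_nonempty.mpr (by simpa using hk) :
      ((Finset.univ : Finset (Fin n)).powersetCard k).Nonempty)
    (fun S => ∑ i ∈ S, x i ^ 2)
  rw [Finset.mem_powersetCard] at hS
  have hsum : ∑ i ∈ S, x i ^ 2 = ∑ i, x i ^ 2 := by
    rw [← hval, ← h]; rfl
  have hzero : ∀ i ∈ (Finset.univ : Finset (Fin n)) \ S, x i ^ 2 = 0 := by
    have := Finset.sum_sdiff_eq_sub (Finset.subset_univ S) (f := fun i => x i ^ 2)
    rw [hsum, sub_self] at this
    intro i hi
    have hnn : ∀ j ∈ Finset.univ \ S, 0 ≤ x j ^ 2 := fun j _ => sq_nonneg _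
    exact (Finset.sum_eq_zero_iff_of_nonneg hnn).mp this i hi
  have hsub : (Finset.univ.filter fun i => x i ≠ 0) ⊆ S := by
    intro i hi
    rw [Finset.mem_filter] at hi
    by_contra hiS
    exact hi.2 (pow_eq_zero_iff (n := 2) (by norm_num) |>.mp
      (hzero i (by simp [hiS])))
  calc l0norm x ≤ S.card := Finset.card_le_card hsub
    _ = k := hS.2

lemma topk2_continuous {n k : ℕ} (hk : k ≤ n) :
    Continuous fun x : Fin n → ℝ => topk2 k hk x := by
  unfold topk2
  exact Continuous.finset_sup'_apply _ fun S _ =>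
    continuous_finset_sum _ fun i _ => (continuous_apply i).pow 2

theorem penalty_method_accumulation_point_optimal {n k : ℕ} (hk1 : 1 ≤ k) (hkn : k ≤ n)
    (φ : (Fin n → ℝ) → ℝ) (hφ : Continuous φ)
    (C : Set (Fin n → ℝ)) (hCne : C.Nonempty) (hCclosed : IsClosed C) (hCconv : Convex ℝ C)
    (P : (Fin n → ℝ) → ℝ) (hP : ∀ x, P x = (∑ i, (x i) ^ 2) - topk2 k hkn x)
    (ρ : ℕ → ℝ) (hρpos : ∀ t, 0 < ρ t) (hρmono : StrictMono ρ)
    (hρtop : Tendsto ρ atTop atTop)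
    (xseq : ℕ → Fin n → ℝ)
    (hmin : ∀ t, xseq t ∈ C ∧ ∀ y ∈ C, φ (xseq t) + ρ t * P (xseq t) ≤ φ y + ρ t * P y)
    (xbar : Fin n → ℝ) (hxbarC : xbar ∈ C) (hxbark : l0norm xbar ≤ k)
    (hxbaropt : ∀ y ∈ C, l0norm y ≤ k → φ xbar ≤ φ y)
    (xstar : Fin n → ℝ) (ψ : ℕ → ℕ) (hψ : StrictMono ψ)
    (hconv : Tendsto (fun t => xseq (ψ t)) atTop (nhds xstar)) :
    l0norm xstar ≤ k ∧ xstar ∈ C ∧ φ xstar = φ xbar := by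
  have hPnonneg : ∀ x, 0 ≤ P x := by
    intro x; rw [hP x]; linarith [topk2_le hkn x]
  have hPbar : P xbar = 0 := by
    rw [hP xbar, topk2_eq_of_l0 hkn xbar hxbark]; ring
  -- key bound: φ (xseq t) + ρ t * P (xseq t) ≤ φ xbar
  have hbound : ∀ t, φ (xseq t) + ρ t * P (xseq t) ≤ φ xbar := by
    intro t
    have := (hmin t).2 xbar hxbarC
    rwa [hPbar, mul_zero, add_zero] at this
  have hφle : ∀ t, φ (xseq t) ≤ φ xbar := by
    intro t
    have h1 : 0 ≤ ρ t * P (xseq t) := mul_nonneg (hρpos t).le (hPnonneg _)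
    linarith [hbound t]
  -- x* ∈ C
  have hxstarC : xstar ∈ C :=
    hCclosed.mem_of_tendsto hconv (Eventually.of_forall fun t => (hmin (ψ t)).1)
  -- φ (xseq (ψ t)) → φ xstar
  have hφconv : Tendsto (fun t => φ (xseq (ψ t))) atTop (nhds (φ xstar)) :=
    (hφ.continuousAt.tendsto).comp hconv
  -- φ x* ≤ φ xbar
  have hφstarle : φ xstar ≤ φ xbar :=
    le_of_tendsto hφconv (Eventually.of_forall fun t => hφle (ψ t))
  -- P (xseq (ψ t)) → 0 by squeeze
  have hρψ : Tendsto (fun t => ρ (ψ t)) atTop atTop :=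
    hρtop.comp hψ.tendsto_atTop
  have hinv : Tendsto (fun t => (ρ (ψ t))⁻¹) atTop (nhds 0) :=
    hρψ.inv_tendsto_atTop
  have hub : Tendsto (fun t => (φ xbar - φ (xseq (ψ t))) * (ρ (ψ t))⁻¹) atTop (nhds 0) := by
    have h1 : Tendsto (fun t => (φ xbar - φ (xseq (ψ t))) * (ρ (ψ t))⁻¹) atTop
        (nhds ((φ xbar - φ xstar) * 0)) :=
      (tendsto_const_nhds.sub hφconv).mul hinv
    simpa using h1
  have hPsq : Tendsto (fun t => P (xseq (ψ t))) atTop (nhds 0) := by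
    refine tendsto_of_tendsto_of_tendsto_of_le_of_le tendsto_const_nhds hub
      (fun t => hPnonneg _) ?_
    intro t
    have hb := hbound (ψ t)
    have hpos := hρpos (ψ t)
    show P (xseq (ψ t)) ≤ (φ xbar - φ (xseq (ψ t))) * (ρ (ψ t))⁻¹
    rw [← div_eq_mul_inv, le_div_iff₀ hpos]
    linarith [hb]
  -- P continuous ⇒ P x* = 0
  have hPcont : Continuous P := by
    have : P = fun x => (∑ i, x i ^ 2) - topk2 k hkn x := funext hP
    rw [this]
    exact (continuous_finset_sum _ fun i _ => (continuous_apply i).pow 2).sub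
      (topk2_continuous hkn)
  have hPstar : P xstar = 0 :=
    tendsto_nhds_unique ((hPcont.continuousAt.tendsto).comp hconv) hPsq
  have hl0 : l0norm xstar ≤ k := by
    apply l0_le_of_topk2 hkn
    have := hP xstar
    rw [hPstar] at this
    linarith
  exact ⟨hl0, hxstarC, le_antisymm hφstarle (hxbaropt xstar hxstarC hl0)⟩
end

section
/- Descent lemma for the proximal DC step: Let f: ℝⁿ → ℝ be differentiable with L-Lipschitz gradient, g₁ proper lower semicontinuous convex, g₂ convex, F = f + g₁ − g₂. Given x ∈ dom g₁, s ∈ ∂g₂(x), and l > 0, let x⁺ be the minimizer of (l/2)‖z‖₂² + g₁(z) − zᵀ(l x − ∇f(x) + s) over z ∈ ℝⁿ. Then F(x⁺) ≤ F(x) − ((l − L)/2)‖x⁺ − x‖₂². -/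
open RealInnerProductSpace

lemma descent_aux {n : ℕ} (f : EuclideanSpace ℝ (Fin n) → ℝ)
    (f' : EuclideanSpace ℝ (Fin n) → EuclideanSpace ℝ (Fin n))
    (hf : ∀ x, HasGradientAt f (f' x) x)
    (L : ℝ) (hL : ∀ x y, ‖f' x - f' y‖ ≤ L * ‖x - y‖)
    (x y : EuclideanSpace ℝ (Fin n)) :
    f y ≤ f x + ⟪f' x, y - x⟫ + L / 2 * ‖y - x‖ ^ 2 := by
  set v := y - x with hv
  set g : ℝ → ℝ := fun t => f (x + t • v) - t * ⟪f' x, v⟫ - L * ‖v‖ ^ 2 * t ^ 2 / 2 with hg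
  have hline : ∀ t : ℝ, HasDerivAt (fun t : ℝ => x + t • v) v t := by
    intro t
    simpa using ((hasDerivAt_id t).smul_const v).const_add x
  have hgd : ∀ t : ℝ, HasDerivAt g
      (⟪f' (x + t • v), v⟫ - ⟪f' x, v⟫ - L * ‖v‖ ^ 2 * t) t := by
    intro t
    have h1 : HasDerivAt (fun t : ℝ => f (x + t • v)) (⟪f' (x + t • v), v⟫) t := by
      have := ((hf (x + t • v)).hasFDerivAt.comp_hasDerivAt t (hline t))
      simpa [InnerProductSpace.toDual_apply_apply, Function.comp_def] using this
    have h2 : HasDerivAt (fun t : ℝ => t * ⟪f' x, v⟫) (⟪f' x, v⟫) t := by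
      simpa using (hasDerivAt_id t).mul_const (⟪f' x, v⟫)
    have h3 : HasDerivAt (fun t : ℝ => L * ‖v‖ ^ 2 * t ^ 2 / 2) (L * ‖v‖ ^ 2 * t) t := by
      have := ((hasDerivAt_pow 2 t).const_mul (L * ‖v‖ ^ 2)).div_const 2
      exact this.congr_deriv (by norm_num; ring)
    exact (h1.sub h2).sub h3
  have hanti : AntitoneOn g (Set.Icc 0 1) := by
    apply AntitoneOn.mono (s := Set.Icc (0:ℝ) 1)
      (antitoneOn_of_deriv_nonpos (convex_Icc 0 1)
        (fun t _ => (hgd t).continuousAt.continuousWithinAt)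
        (fun t ht => ((hgd t).differentiableAt).differentiableWithinAt) ?_) le_rfl
    intro t ht
    rw [interior_Icc] at ht
    rw [(hgd t).deriv]
    have h1 : ⟪f' (x + t • v) - f' x, v⟫ ≤ ‖f' (x + t • v) - f' x‖ * ‖v‖ :=
      real_inner_le_norm _ _
    have h2 : ‖f' (x + t • v) - f' x‖ ≤ L * (t * ‖v‖) := by
      have := hL (x + t • v) x
      simpa [norm_smul, abs_of_pos ht.1, mul_assoc] using this
    have h3 : (0:ℝ) ≤ ‖v‖ := norm_nonneg _
    nlinarith [inner_sub_left (𝕜 := ℝ) (f' (x + t • v)) (f' x) v]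
  have := hanti (Set.left_mem_Icc.2 zero_le_one) (Set.right_mem_Icc.2 zero_le_one) zero_le_one
  have hy : x + (1:ℝ) • v = y := by simp [hv]
  simp only [hg, hy, one_mul, one_pow, zero_smul, add_zero, zero_mul, zero_pow,
    mul_zero, zero_div, sub_zero, ne_eq, OfNat.ofNat_ne_zero, not_false_eq_true] at this
  linarith

theorem proximal_dc_descent_lemma {n : ℕ}
    (f g₁ g₂ : EuclideanSpace ℝ (Fin n) → ℝ)
    (f' : EuclideanSpace ℝ (Fin n) → EuclideanSpace ℝ (Fin n))
    (hf : ∀ x, HasGradientAt f (f' x) x)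
    (L : ℝ) (hL : ∀ x y, ‖f' x - f' y‖ ≤ L * ‖x - y‖)
    (hg₁lsc : LowerSemicontinuous g₁) (hg₁ : ConvexOn ℝ Set.univ g₁)
    (hg₂ : ConvexOn ℝ Set.univ g₂)
    (F : EuclideanSpace ℝ (Fin n) → ℝ) (hF : ∀ z, F z = f z + g₁ z - g₂ z)
    (x s : EuclideanSpace ℝ (Fin n))
    (hs : ∀ y, g₂ x + ⟪s, y - x⟫ ≤ g₂ y)
    (l : ℝ) (hl : 0 < l)
    (xp : EuclideanSpace ℝ (Fin n))
    (hxp : ∀ z, (l / 2) * ‖xp‖ ^ 2 + g₁ xp - ⟪xp, l • x - f' x + s⟫ ≤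
      (l / 2) * ‖z‖ ^ 2 + g₁ z - ⟪z, l • x - f' x + s⟫) :
    F xp ≤ F x - ((l - L) / 2) * ‖xp - x‖ ^ 2 := by
  have hdesc := descent_aux f f' hf L hL x xp
  have hkey := hxp x
  have hsub := hs xp
  have hexp : ∀ z : EuclideanSpace ℝ (Fin n),
      ⟪z, l • x - f' x + s⟫ = l * ⟪z, x⟫ - ⟪z, f' x⟫ + ⟪z, s⟫ := by
    intro z
    rw [inner_add_right, inner_sub_right, real_inner_smul_right]
  rw [hexp, hexp] at hkey
  have hnorm : ‖xp - x‖ ^ 2 = ‖xp‖ ^ 2 - 2 * ⟪xp, x⟫ + ‖x‖ ^ 2 := by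
    rw [← real_inner_self_eq_norm_sq, ← real_inner_self_eq_norm_sq, ← real_inner_self_eq_norm_sq,
      inner_sub_left, inner_sub_right, inner_sub_right, real_inner_comm x xp]
    ring
  have hi1 : ⟪f' x, xp - x⟫ = ⟪xp, f' x⟫ - ⟪x, f' x⟫ := by
    rw [inner_sub_right, real_inner_comm, real_inner_comm x (f' x)]
  have hi2 : ⟪s, xp - x⟫ = ⟪xp, s⟫ - ⟪x, s⟫ := by
    rw [inner_sub_right, real_inner_comm, real_inner_comm x s]
  rw [hF, hF]
  rw [real_inner_self_eq_norm_sq] at *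
  nlinarith [hkey, hdesc, hsub, hnorm, hi1, hi2]
end

section
/- Subdifferential of the top-(k,2) norm: for x ∈ ℝⁿ with a permutation π such that x_{π(1)}² ≥ ⋯ ≥ x_{π(n)}², and assuming the k-th and (k+1)-th sorted squared values are distinct (x_{π(k)}² > x_{π(k+1)}²), the vector v with v_{π(i)} = 2x_{π(i)} for i ≤ k and v_{π(i)} = 0 for i > k is a subgradient of the convex function |||·|||²_{k,2} at x, i.e., |||y|||²_{k,2} ≥ |||x|||²_{k,2} + ⟨v, y − x⟩ for all y ∈ ℝⁿ. -/
theorem topk2_subgradient {n k : ℕ} (hk1 : 1 ≤ k) (hkn : k < n)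
    (x : Fin n → ℝ) (π : Equiv.Perm (Fin n))
    (hsort : ∀ i j : Fin n, i ≤ j → (x (π j)) ^ 2 ≤ (x (π i)) ^ 2)
    (hdist : (x (π ⟨k - 1, by omega⟩)) ^ 2 > (x (π ⟨k, hkn⟩)) ^ 2)
    (v : Fin n → ℝ)
    (hv : ∀ i, v i = if ((π.symm i : Fin n) : ℕ) < k then 2 * x i else 0) :
    ∀ y : Fin n → ℝ,
      topk2 k hkn.le x + ∑ i, v i * (y i - x i) ≤ topk2 k hkn.le y := by
  intro y
  classical
  set S : Finset (Fin n) := Finset.univ.filter (fun j => (j : ℕ) < k) with hS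
  set Sstar : Finset (Fin n) := S.image π with hSstar
  have hScard : S.card = k := by
    have hSe : S = Finset.image (Fin.castLE hkn.le) Finset.univ := by
      ext i
      simp only [hS, Finset.mem_filter, Finset.mem_univ, true_and, Finset.mem_image]
      constructor
      · intro h; exact ⟨⟨(i : ℕ), h⟩, by simp [Fin.ext_iff]⟩
      · rintro ⟨j, rfl⟩; exact j.isLt
    rw [hSe, Finset.card_image_of_injective _ (Fin.castLE_injective _)]
    simp
  have hSstarcard : Sstar.card = k := by
    rw [hSstar, Finset.card_image_of_injective _ π.injective, hScard]
  -- the key comparison: any k-subset sum of squares of x is ≤ the sum over Sstar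
  have key : ∀ T : Finset (Fin n), T.card = k →
      ∑ i ∈ T, x i ^ 2 ≤ ∑ i ∈ Sstar, x i ^ 2 := by
    intro T hT
    set f : Fin n → ℝ := fun j => x (π j) ^ 2 with hf
    set T' : Finset (Fin n) := T.image π.symm with hT'
    have hT'card : T'.card = k := by
      rw [hT', Finset.card_image_of_injective _ π.symm.injective, hT]
    have h1 : ∑ i ∈ T, x i ^ 2 = ∑ j ∈ T', f j := by
      rw [hT', Finset.sum_image (fun a _ b _ h => π.symm.injective h)]
      simp [hf]
    have h2 : ∑ i ∈ Sstar, x i ^ 2 = ∑ j ∈ S, f j := by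
      rw [hSstar, Finset.sum_image (fun a _ b _ h => π.injective h)]
    rw [h1, h2]
    have hcard : (T' \ S).card = (S \ T').card :=
      Finset.card_sdiff_comm (by rw [hT'card, hScard])
    have c := f ⟨k - 1, by omega⟩
    have hub : ∀ b ∈ T' \ S, f b ≤ f ⟨k - 1, by omega⟩ := by
      intro b hb
      have hbk : ¬ ((b : ℕ) < k) := by
        have := (Finset.mem_sdiff.mp hb).2
        simpa [hS] using this
      exact hsort _ b (by simp [Fin.le_def]; omega)
    have hlb : ∀ a ∈ S \ T', f ⟨k - 1, by omega⟩ ≤ f a := by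
      intro a ha
      have hak : (a : ℕ) < k := by
        have := (Finset.mem_sdiff.mp ha).1
        simpa [hS] using this
      exact hsort a _ (by simp [Fin.le_def]; omega)
    have hdiff : ∑ b ∈ T' \ S, f b ≤ ∑ a ∈ S \ T', f a := by
      calc ∑ b ∈ T' \ S, f b ≤ (T' \ S).card • f ⟨k - 1, by omega⟩ :=
            Finset.sum_le_card_nsmul _ _ _ hub
        _ = (S \ T').card • f ⟨k - 1, by omega⟩ := by rw [hcard]
        _ ≤ ∑ a ∈ S \ T', f a := Finset.card_nsmul_le_sum _ _ _ hlb
    calc ∑ j ∈ T', f j = ∑ j ∈ T' ∩ S, f j + ∑ j ∈ T' \ S, f j :=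
          (Finset.sum_inter_add_sum_sdiff _ _ _).symm
      _ ≤ ∑ j ∈ T' ∩ S, f j + ∑ j ∈ S \ T', f j := by linarith
      _ = ∑ j ∈ S ∩ T', f j + ∑ j ∈ S \ T', f j := by rw [Finset.inter_comm]
      _ = ∑ j ∈ S, f j := Finset.sum_inter_add_sum_sdiff _ _ _
  have hSstar_mem : Sstar ∈ (Finset.univ : Finset (Fin n)).powersetCard k := by
    rw [Finset.mem_powersetCard]
    exact ⟨Finset.subset_univ _, hSstarcard⟩
  -- topk2 x ≤ sum over Sstar
  have hx_le : topk2 k hkn.le x ≤ ∑ i ∈ Sstar, x i ^ 2 := by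
    apply Finset.sup'_le
    intro T hT
    exact key T (Finset.mem_powersetCard.mp hT).2
  have hy_ge : ∑ i ∈ Sstar, y i ^ 2 ≤ topk2 k hkn.le y := by
    unfold topk2
    exact Finset.le_sup' (fun T => ∑ i ∈ T, y i ^ 2) hSstar_mem
  -- the inner product equals the sum over Sstar
  have hmemSstar : ∀ i : Fin n, i ∈ Sstar ↔ ((π.symm i : Fin n) : ℕ) < k := by
    intro i
    rw [hSstar, Finset.mem_image]
    constructor
    · rintro ⟨a, ha, rfl⟩
      simpa [hS] using ha
    · intro h
      exact ⟨π.symm i, by simpa [hS] using h, by simp⟩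
  have hip : ∑ i, v i * (y i - x i) = ∑ i ∈ Sstar, 2 * x i * (y i - x i) := by
    rw [← Finset.sum_filter_add_sum_filter_not Finset.univ (fun i => i ∈ Sstar)]
    have h0 : ∑ i ∈ Finset.univ.filter (fun i => ¬ i ∈ Sstar), v i * (y i - x i) = 0 := by
      apply Finset.sum_eq_zero
      intro i hi
      have : ¬ ((π.symm i : Fin n) : ℕ) < k := by
        rw [← hmemSstar]; exact (Finset.mem_filter.mp hi).2
      rw [hv i, if_neg this]; ring
    rw [h0, add_zero]
    rw [Finset.filter_mem_eq_inter, Finset.univ_inter]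
    apply Finset.sum_congr rfl
    intro i hi
    rw [hv i, if_pos ((hmemSstar i).mp hi)]
  calc topk2 k hkn.le x + ∑ i, v i * (y i - x i)
      ≤ ∑ i ∈ Sstar, x i ^ 2 + ∑ i ∈ Sstar, 2 * x i * (y i - x i) := by
        rw [hip]; linarith
    _ = ∑ i ∈ Sstar, (x i ^ 2 + 2 * x i * (y i - x i)) := by rw [Finset.sum_add_distrib]
    _ ≤ ∑ i ∈ Sstar, y i ^ 2 := by
        apply Finset.sum_le_sum
        intro i _
        nlinarith [sq_nonneg (y i - x i)]
    _ ≤ topk2 k hkn.le y := hy_ge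
end
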